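/- arXiv:2005.03874 — 2 statements merged into one kernel-verified Lean document; each statement's English description precedes it below -/
import Mathlib

section
/- (Sun) For all natural numbers m and n and all rationals x, y, z with x + y + z = 1, one has (−1)^m · ∑_{j=0}^{m} C(m, j)·x^{m−j}·B_{n+j}(y) = (−1)^n · ∑_{k=0}^{n} C(n, k)·x^{n−k}·B_{m+k}(z). -/
open Finset

lemma aux_choose (m : ℕ) : ∀ n i : ℕ,
    ∑ j ∈ range (m+1), (-1:ℚ)^j * (m.choose j) * ((n+j).choose i)
      = (-1:ℚ)^m * (if m ≤ i then ((n.choose (i-m)) : ℚ) else 0) := by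
  induction m with
  | zero => intro n i; simp
  | succ m ih =>
    intro n i
    have key : ∑ j ∈ range (m+2), (-1:ℚ)^j * ((m+1).choose j) * ((n+j).choose i)
        = (∑ j ∈ range (m+1), (-1:ℚ)^j * (m.choose j) * ((n+j).choose i))
          - ∑ j ∈ range (m+1), (-1:ℚ)^j * (m.choose j) * (((n+1)+j).choose i) := by
      rw [Finset.sum_range_succ' _ (m+1)]
      have e1 : ∀ j, ((m+1).choose (j+1) : ℚ) = m.choose j + m.choose (j+1) := by
        intro j; rw [Nat.choose_succ_succ]; push_cast; ring
      have split : ∑ j ∈ range (m+1), (-1:ℚ)^(j+1) * ((m+1).choose (j+1)) * ((n+(j+1)).choose i)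
          = (∑ j ∈ range (m+1), (-1:ℚ)^(j+1) * (m.choose j) * ((n+(j+1)).choose i))
            + ∑ j ∈ range (m+1), (-1:ℚ)^(j+1) * (m.choose (j+1)) * ((n+(j+1)).choose i) := by
        rw [← Finset.sum_add_distrib]
        refine Finset.sum_congr rfl fun j _ => ?_
        rw [e1]; ring
      rw [split]
      have h2 : ∑ j ∈ range (m+1), (-1:ℚ)^(j+1) * (m.choose (j+1)) * ((n+(j+1)).choose i)
          = (∑ j ∈ range (m+2), (-1:ℚ)^j * (m.choose j) * ((n+j).choose i))
            - (-1:ℚ)^0 * (m.choose 0) * ((n+0).choose i) := by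
        rw [Finset.sum_range_succ' _ (m+1)]; ring
      rw [h2, Finset.sum_range_succ _ (m+1)]
      have h3 : ∑ j ∈ range (m+1), (-1:ℚ)^(j+1) * (m.choose j) * ((n+(j+1)).choose i)
          = ∑ j ∈ range (m+1), (-1:ℚ)^(j+1) * (m.choose j) * (((n+1)+j).choose i) := by
        refine Finset.sum_congr rfl fun j _ => ?_
        have hj : n+(j+1) = (n+1)+j := by omega
        rw [hj]
      rw [h3]
      simp only [Nat.choose_succ_self, Nat.cast_zero]
      have h4 : ∑ j ∈ range (m+1), (-1:ℚ)^(j+1) * (m.choose j) * (((n+1)+j).choose i)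
          = - ∑ j ∈ range (m+1), (-1:ℚ)^j * (m.choose j) * (((n+1)+j).choose i) := by
        rw [← Finset.sum_neg_distrib]
        refine Finset.sum_congr rfl fun j _ => ?_; ring
      rw [h4]
      simp only [Nat.choose_zero_right, Nat.cast_one]
      ring
    rw [key, ih n i, ih (n+1) i]
    by_cases h1 : m + 1 ≤ i
    · have h2 : m ≤ i := by omega
      simp only [if_pos h1, if_pos h2]
      have hp : (n+1).choose (i-m) = n.choose (i-(m+1)) + n.choose (i-(m+1)+1) := by
        have h : i - m = (i - (m+1)) + 1 := by omega
        rw [h, Nat.choose_succ_succ]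
      have h' : i - (m+1) + 1 = i - m := by omega
      rw [hp, h']
      push_cast; ring
    · simp only [if_neg h1]
      by_cases h2 : m ≤ i
      · have : i = m := by omega
        subst this
        simp
      · simp only [if_neg h2]; ring


lemma bernoulli_eval_def (n : ℕ) (a : ℚ) : (Polynomial.bernoulli n).eval a
    = ∑ i ∈ range (n+1), (bernoulli i : ℚ) * (n.choose i) * a^(n-i) := by
  simp [Polynomial.bernoulli, Polynomial.eval_finset_sum]

lemma bernoulli_eval_add (n : ℕ) (a b : ℚ) : (Polynomial.bernoulli n).eval (a + b)
    = ∑ k ∈ range (n+1), (n.choose k : ℚ) * b^(n-k) * (Polynomial.bernoulli k).eval a := by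
  rw [bernoulli_eval_def]
  have step1 : ∀ i ∈ range (n+1), (bernoulli i : ℚ) * (n.choose i) * (a+b)^(n-i)
      = ∑ j ∈ Finset.Ico i (n+1), (bernoulli i : ℚ) * (n.choose i)
          * ((n-i).choose (j-i)) * a^(j-i) * b^(n-j) := by
    intro i hi
    rw [mem_range] at hi
    rw [add_pow, Finset.mul_sum, Finset.sum_Ico_eq_sum_range]
    have hr : n + 1 - i = n - i + 1 := by omega
    rw [hr]
    refine Finset.sum_congr rfl fun l hl => ?_
    rw [mem_range] at hl
    have h1 : i + l - i = l := by omega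
    have h2 : n - (i + l) = n - i - l := by omega
    rw [h1, h2]
    ring
  rw [Finset.sum_congr rfl step1, Finset.range_eq_Ico, Finset.sum_Ico_Ico_comm]
  refine Finset.sum_congr rfl fun j hj => ?_
  rw [Finset.mem_Ico] at hj
  rw [bernoulli_eval_def, Finset.mul_sum, ← Finset.range_eq_Ico]
  refine Finset.sum_congr rfl fun i hi => ?_
  rw [mem_range] at hi
  have hij : i ≤ j := by omega
  have hjn : j ≤ n := by omega
  have hc : ((n.choose i : ℚ)) * ((n-i).choose (j-i)) = (n.choose j) * (j.choose i) := by
    have : n.choose j * j.choose i = n.choose i * (n - i).choose (j - i) := Nat.choose_mul hij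
    have h2 : (n.choose j * j.choose i : ℚ) = (n.choose i * (n-i).choose (j-i) : ℕ) := by
      rw [← this]; push_cast; ring
    push_cast at h2 ⊢
    linarith
  calc (bernoulli i : ℚ) * (n.choose i) * ((n-i).choose (j-i)) * a^(j-i) * b^(n-j)
      = ((n.choose i : ℚ) * ((n-i).choose (j-i))) * ((bernoulli i : ℚ) * a^(j-i) * b^(n-j)) := by ring
    _ = ((n.choose j : ℚ) * (j.choose i)) * ((bernoulli i : ℚ) * a^(j-i) * b^(n-j)) := by rw [hc]
    _ = (n.choose j : ℚ) * b^(n-j) * ((bernoulli i : ℚ) * (j.choose i) * a^(j-i)) := by ring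

lemma bernoulli_eval_one_sub (n : ℕ) (x : ℚ) :
    (Polynomial.bernoulli n).eval (1 - x) = (-1:ℚ)^n * (Polynomial.bernoulli n).eval x := by
  have h : (1 : ℚ) - x = 1 + (-x) := by ring
  rw [h, bernoulli_eval_add, bernoulli_eval_def, Finset.mul_sum]
  refine Finset.sum_congr rfl fun k hk => ?_
  rw [mem_range] at hk
  rw [Polynomial.bernoulli_eval_one, bernoulli'_eq_bernoulli]
  have hkn : k ≤ n := by omega
  have : (-x)^(n-k) = (-1:ℚ)^(n-k) * x^(n-k) := by rw [neg_pow]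
  rw [this]
  have hsgn : (-1:ℚ)^(n-k) * (-1:ℚ)^k = (-1:ℚ)^n := by
    rw [← pow_add]; congr 1; omega
  calc (n.choose k : ℚ) * ((-1)^(n-k) * x^(n-k)) * ((-1)^k * bernoulli k)
      = ((-1:ℚ)^(n-k) * (-1)^k) * ((n.choose k : ℚ) * x^(n-k) * bernoulli k) := by ring
    _ = (-1:ℚ)^n * ((bernoulli k : ℚ) * (n.choose k) * x^(n-k)) := by rw [hsgn]; ring

theorem sun_identity (m n : ℕ) (x y z : ℚ) (hxyz : x + y + z = 1) :
    (-1 : ℚ) ^ m *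
      ∑ j ∈ Finset.range (m + 1),
        (m.choose j : ℚ) * x ^ (m - j) * (Polynomial.bernoulli (n + j)).eval y
    = (-1 : ℚ) ^ n *
        ∑ k ∈ Finset.range (n + 1),
          (n.choose k : ℚ) * x ^ (n - k) * (Polynomial.bernoulli (m + k)).eval z := by
  have hy : y = 1 - (z + x) := by linarith
  have key : ∀ j ∈ range (m+1),
      (-1:ℚ)^m * ((m.choose j : ℚ) * x ^ (m - j) * (Polynomial.bernoulli (n + j)).eval y)
      = ∑ i ∈ range (m+n+1), (-1:ℚ)^(m+(n+j)) * (m.choose j) * ((n+j).choose i)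
          * x^(m+n-i) * (Polynomial.bernoulli i).eval z := by
    intro j hj
    rw [mem_range] at hj
    rw [hy, bernoulli_eval_one_sub, bernoulli_eval_add]
    have expand : (-1:ℚ)^m * ((m.choose j : ℚ) * x ^ (m - j) * ((-1:ℚ)^(n+j) *
        ∑ i ∈ range ((n+j)+1), ((n+j).choose i : ℚ) * x^((n+j)-i) * (Polynomial.bernoulli i).eval z))
        = ∑ i ∈ range ((n+j)+1), (-1:ℚ)^(m+(n+j)) * (m.choose j) * ((n+j).choose i)
            * x^(m+n-i) * (Polynomial.bernoulli i).eval z := by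
      rw [Finset.mul_sum, Finset.mul_sum, Finset.mul_sum]
      refine Finset.sum_congr rfl fun i hi => ?_
      rw [mem_range] at hi
      have hx : x^(m-j) * x^((n+j)-i) = x^(m+n-i) := by
        rw [← pow_add]
        congr 1
        omega
      rw [pow_add (-1:ℚ) m (n+j)]
      calc (-1:ℚ)^m * ((m.choose j : ℚ) * x^(m-j) * ((-1:ℚ)^(n+j) *
              (((n+j).choose i : ℚ) * x^((n+j)-i) * (Polynomial.bernoulli i).eval z)))
          = ((-1:ℚ)^m * (-1:ℚ)^(n+j)) * (m.choose j) * ((n+j).choose i)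
              * (x^(m-j) * x^((n+j)-i)) * (Polynomial.bernoulli i).eval z := by ring
        _ = _ := by rw [hx]
    rw [expand]
    refine Finset.sum_subset ?_ ?_
    · intro i hi
      rw [mem_range] at hi ⊢
      omega
    · intro i _ hi2
      rw [mem_range] at hi2
      have : (n+j).choose i = 0 := Nat.choose_eq_zero_of_lt (by omega)
      rw [this]
      push_cast
      ring
  rw [Finset.mul_sum, Finset.sum_congr rfl key, Finset.sum_comm]
  have inner : ∀ i ∈ range (m+n+1),
      (∑ j ∈ range (m+1), (-1:ℚ)^(m+(n+j)) * (m.choose j) * ((n+j).choose i)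
        * x^(m+n-i) * (Polynomial.bernoulli i).eval z)
      = (-1:ℚ)^n * (if m ≤ i then ((n.choose (i-m) : ℚ) * x^(m+n-i)
          * (Polynomial.bernoulli i).eval z) else 0) := by
    intro i _
    have factor : (∑ j ∈ range (m+1), (-1:ℚ)^(m+(n+j)) * (m.choose j) * ((n+j).choose i)
        * x^(m+n-i) * (Polynomial.bernoulli i).eval z)
        = ((-1:ℚ)^(m+n) * x^(m+n-i) * (Polynomial.bernoulli i).eval z)
          * ∑ j ∈ range (m+1), (-1:ℚ)^j * (m.choose j) * ((n+j).choose i) := by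
      rw [Finset.mul_sum]
      refine Finset.sum_congr rfl fun j _ => ?_
      have hp : (-1:ℚ)^(m+(n+j)) = (-1:ℚ)^(m+n) * (-1:ℚ)^j := by
        rw [← pow_add]
        congr 1
        omega
      rw [hp]
      ring
    rw [factor, aux_choose m n i]
    have hsgn : (-1:ℚ)^(m+n) * (-1:ℚ)^m = (-1:ℚ)^n := by
      rw [← pow_add]
      have h : m + n + m = 2*m + n := by omega
      rw [h, pow_add, pow_mul]
      norm_num
    split_ifs with h
    · calc ((-1:ℚ)^(m+n) * x^(m+n-i) * (Polynomial.bernoulli i).eval z)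
            * ((-1:ℚ)^m * (n.choose (i-m) : ℚ))
          = ((-1:ℚ)^(m+n) * (-1:ℚ)^m) * ((n.choose (i-m) : ℚ) * x^(m+n-i)
              * (Polynomial.bernoulli i).eval z) := by ring
        _ = _ := by rw [hsgn]
    · ring
  rw [Finset.sum_congr rfl inner, ← Finset.mul_sum]
  congr 1
  rw [Finset.range_eq_Ico, ← Finset.sum_Ico_consecutive _ (Nat.zero_le m)
    (by omega : m ≤ m+n+1)]
  have hz : ∑ i ∈ Finset.Ico 0 m, (if m ≤ i then ((n.choose (i-m) : ℚ) * x^(m+n-i)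
      * (Polynomial.bernoulli i).eval z) else 0) = 0 := by
    refine Finset.sum_eq_zero fun i hi => ?_
    rw [Finset.mem_Ico] at hi
    rw [if_neg (by omega)]
  rw [hz, zero_add, Finset.sum_Ico_eq_sum_range]
  have hr : m + n + 1 - m = n + 1 := by omega
  rw [hr]
  refine Finset.sum_congr rfl fun k hk => ?_
  rw [mem_range] at hk
  rw [if_pos (by omega)]
  have h1 : m + k - m = k := by omega
  have h2 : m + n - (m + k) = n - k := by omega
  rw [h1, h2]
end

section
/- (Momiyama) For all natural numbers m and n with m+n > 0, one has ∑_{j=0}^{m+1} C(m+1, j)·(n+j+1)·B_{n+j} = −(−1)^{m+n}·∑_{k=0}^{n+1} C(n+1, k)·(m+k+1)·B_{m+k}. -/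
open Finset

section aux
open Polynomial

noncomputable def Lb : Polynomial ℚ →ₗ[ℚ] ℚ :=
  Polynomial.lsum fun k => LinearMap.toSpanSingleton ℚ ℚ (_root_.bernoulli k)

lemma Lb_monomial (k : ℕ) (a : ℚ) : Lb (monomial k a) = a * _root_.bernoulli k := by
  simp [Lb, Polynomial.sum_monomial_index, LinearMap.toSpanSingleton_apply, smul_eq_mul]

lemma neg_pow_bernoulli (k : ℕ) :
    (-1 : ℚ) ^ k * _root_.bernoulli k = _root_.bernoulli k + if k = 1 then 1 else 0 := by
  match k with
  | 0 => simp
  | 1 => norm_num [_root_.bernoulli_one]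
  | (k+2) =>
    rcases Nat.even_or_odd (k+2) with h | h
    · simp [h.neg_one_pow]
    · have hz : _root_.bernoulli (k+2) = 0 := by
        rw [bernoulli_eq_bernoulli'_of_ne_one (by omega), bernoulli'_eq_zero_of_odd h (by omega)]
      simp [hz]

lemma Lb_X_add_one_pow (k : ℕ) : Lb ((X + 1 : ℚ[X]) ^ k) = (-1 : ℚ) ^ k * _root_.bernoulli k := by
  have hexp : ((X + 1 : ℚ[X])) ^ k = ∑ j ∈ range (k + 1), monomial j ((k.choose j : ℚ)) := by
    rw [add_pow]
    refine Finset.sum_congr rfl fun j hj => ?_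
    rw [one_pow, mul_one, ← C_mul_X_pow_eq_monomial, mul_comm]
    simp
  rw [hexp, map_sum]
  simp only [Lb_monomial]
  rw [Finset.sum_range_succ, _root_.sum_bernoulli, Nat.choose_self, Nat.cast_one, one_mul,
    neg_pow_bernoulli]
  ring

lemma Lb_comp (p : ℚ[X]) : Lb (p.comp (-(X + 1))) = Lb p := by
  induction p using Polynomial.induction_on' with
  | add p q hp hq => rw [add_comp, map_add, map_add, hp, hq]
  | monomial k a =>
    rw [Lb_monomial, monomial_comp, neg_pow]
    have : (C a * ((-1 : ℚ[X]) ^ k * (X + 1) ^ k)) = ((-1:ℚ)^k * a) • ((X + 1 : ℚ[X]) ^ k) := by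
      rw [smul_eq_C_mul, C_mul, C_pow, map_neg, map_one]
      ring
    rw [this, map_smul, smul_eq_mul, Lb_X_add_one_pow]
    have h1 : ((-1:ℚ)^k) * ((-1:ℚ)^k) = 1 := by
      rw [← pow_add, Even.neg_one_pow ⟨k, rfl⟩]
    linear_combination (a * _root_.bernoulli k) * h1

end aux

section main
open Polynomial

noncomputable def F (m n : ℕ) : ℚ[X] := X ^ (n + 1) * (X + 1) ^ (m + 1)

lemma F_comp (m n : ℕ) : (F m n).comp (-(X + 1)) = ((-1 : ℚ) ^ (m + n)) • F n m := by
  rw [F, F, mul_comp, pow_comp, pow_comp, X_comp, add_comp, X_comp, one_comp]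
  have h1 : (-(X + 1) + 1 : ℚ[X]) = -X := by ring
  rw [h1, neg_pow, neg_pow, smul_eq_C_mul]
  have hC : (C ((-1 : ℚ) ^ (m + n)) : ℚ[X]) = (-1) ^ (m + n) := by
    rw [map_pow, map_neg, map_one]
  rw [hC]
  have e : ((-1 : ℚ[X])) ^ (n + 1) * (-1) ^ (m + 1) = (-1) ^ (m + n) := by
    rw [← pow_add, show n + 1 + (m + 1) = (m + n) + 2 from by omega, pow_add]
    norm_num
  linear_combination ((X + 1 : ℚ[X]) ^ (n + 1) * X ^ (m + 1)) * e

lemma F_deriv_comp (m n : ℕ) :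
    (derivative (F m n)).comp (-(X + 1)) = ((-1 : ℚ) ^ (m + n + 1)) • derivative (F n m) := by
  have h := derivative_comp (F m n) (-(X + 1))
  rw [F_comp, map_smul] at h
  have hq : derivative (-(X + 1) : ℚ[X]) = -1 := by simp
  rw [hq, smul_eq_C_mul, map_pow, map_neg, map_one] at h
  rw [smul_eq_C_mul, map_pow, map_neg, map_one, pow_succ]
  linear_combination h

lemma Lb_deriv (m n : ℕ) :
    Lb (derivative (F m n))
      = ∑ j ∈ range (m + 2), ((m + 1).choose j : ℚ) * ((n : ℚ) + (j : ℚ) + 1)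
          * _root_.bernoulli (n + j) := by
  have hF : F m n = ∑ j ∈ range (m + 2), monomial (n + 1 + j) ((m + 1).choose j : ℚ) := by
    rw [F, add_pow, Finset.mul_sum]
    refine Finset.sum_congr rfl fun j hj => ?_
    rw [one_pow, mul_one, ← C_eq_natCast, ← C_mul_X_pow_eq_monomial, pow_add]
    ring
  rw [hF, map_sum, map_sum]
  simp only [derivative_monomial, Lb_monomial]
  refine Finset.sum_congr rfl fun j hj => ?_
  rw [show n + 1 + j - 1 = n + j from by omega]
  push_cast
  ring

end main

theorem momiyama (m n : ℕ) (hmn : 0 < m + n) :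
    ∑ j ∈ Finset.range (m + 2), ((m + 1).choose j : ℚ) * (n + j + 1) * bernoulli (n + j)
    = -(-1 : ℚ) ^ (m + n) *
        ∑ k ∈ Finset.range (n + 2), ((n + 1).choose k : ℚ) * (m + k + 1) * bernoulli (m + k) := by
  rw [← Lb_deriv m n, ← Lb_deriv n m, ← Lb_comp (Polynomial.derivative (F m n)),
    F_deriv_comp, map_smul, smul_eq_mul, pow_succ]
  ring
end
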